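/- For G = GL_{n+1}(ℝ), H = GL_n(ℝ) embedded as diag(h,1), the restriction map rest_k : f ↦ (h ↦ f(diag(h,1)·x_k)) maps the principal series π_{ξ,λ} of G to the principal series τ_{η_k(ξ), ν_k(λ)} of H, i.e., if f : G → ℂ satisfies f(g·man) = ∏_i |m_ia_i|_{ξ_i}^{−λ_i−ρ_i} f(g) for the upper-triangular Borel of G, then rest_k f satisfies the corresponding covariance for the upper-triangular Borel of H with parameters η_k(ξ) = (ξ_1,…,ξ_k, ξ_{k+2},…,ξ_{n+1}) and ν_k(λ) = (λ_1+½,…,λ_k+½, λ_{k+2}−½,…,λ_{n+1}−½), and rest_k is H-equivariant for the left regular actions. -/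
import Mathlib

open Matrix

/-- The embedding `GL_n(ℝ) → GL_{n+1}(ℝ)`, `h ↦ diag(h,1)`. -/
def embH (n : ℕ) (h : Matrix (Fin n) (Fin n) ℝ) : Matrix (Fin (n+1)) (Fin (n+1)) ℝ :=
  fun i j =>
    if hi : (i : ℕ) < n then
      if hj : (j : ℕ) < n then h ⟨i, hi⟩ ⟨j, hj⟩ else 0
    else if (j : ℕ) < n then 0 else 1

/-- The permutation matrix `x_k` with block form `[[I_k,0,0],[0,0,I_{n-k}],[0,1,0]]`. -/
def xmat (n k : ℕ) : Matrix (Fin (n+1)) (Fin (n+1)) ℝ :=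
  fun i j =>
    if ((i : ℕ) < k ∧ j = i) ∨ (k ≤ (i : ℕ) ∧ (i : ℕ) < n ∧ (j : ℕ) = (i : ℕ) + 1)
        ∨ ((i : ℕ) = n ∧ (j : ℕ) = k) then 1 else 0

/-- `f : GL_m(ℝ) → ℂ` lies in the principal series `π_{ξ,λ}` (smooth normalized induction from
the upper triangular Borel): `f(g·man) = ∏ᵢ |dᵢ|^{−λᵢ−ρᵢ}_{ξᵢ} f(g)`, where
`ρᵢ = (m−1−2i)/2` (0-based) and `|x|^λ_ξ = sgn(x)^ξ |x|^λ`. -/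
def PS (m : ℕ) (ξ : Fin m → ℕ) (lam : Fin m → ℂ)
    (f : Matrix (Fin m) (Fin m) ℝ → ℂ) : Prop :=
  ∀ (g u : Matrix (Fin m) (Fin m) ℝ) (d : Fin m → ℝ),
    (∀ i, d i ≠ 0) → u.BlockTriangular id → (∀ i, u i i = 1) →
    f (g * (Matrix.diagonal d * u))
      = (∏ i, (Real.sign (d i) : ℂ) ^ (ξ i)
          * ((|d i| : ℝ) : ℂ) ^ (-(lam i) - ((m : ℂ) - 1 - 2 * (i : ℕ)) / 2)) * f g

/-- The restriction operator `rest_k f (h) = f(diag(h,1)·x_k)`. -/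
def restk (n k : ℕ) (f : Matrix (Fin (n+1)) (Fin (n+1)) ℝ → ℂ)
    (h : Matrix (Fin n) (Fin n) ℝ) : ℂ :=
  f (embH n h * xmat n k)

/-- `η_k(ξ) = (ξ_1,…,ξ_k, ξ_{k+2},…,ξ_{n+1})`. -/
def etak (n k : ℕ) (ξ : Fin (n+1) → ℕ) : Fin n → ℕ :=
  fun i => if (i : ℕ) < k then ξ i.castSucc else ξ i.succ

/-- `ν_k(λ) = (λ_1+½,…,λ_k+½, λ_{k+2}−½,…,λ_{n+1}−½)`. -/
noncomputable def nuk (n k : ℕ) (lam : Fin (n+1) → ℂ) : Fin n → ℂ :=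
  fun i => if (i : ℕ) < k then lam i.castSucc + 1/2 else lam i.succ - 1/2

namespace Aux

def sg (n k i : ℕ) : ℕ := if i < k then i else if i < n then i + 1 else k
def tu (n k j : ℕ) : ℕ := if j < k then j else if j = k then n else j - 1

lemma sg_le {n k : ℕ} (hk : k ≤ n) {i : ℕ} (hi : i ≤ n) : sg n k i ≤ n := by
  simp only [sg]; split_ifs <;> omega

lemma tu_le {n k : ℕ} (hk : k ≤ n) {j : ℕ} (hj : j ≤ n) : tu n k j ≤ n := by
  simp only [tu]; split_ifs <;> omega

lemma tu_sg {n k : ℕ} (hk : k ≤ n) {i : ℕ} (hi : i ≤ n) : tu n k (sg n k i) = i := by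
  simp only [sg, tu]; split_ifs <;> omega

lemma sg_tu {n k : ℕ} (hk : k ≤ n) {j : ℕ} (hj : j ≤ n) : sg n k (tu n k j) = j := by
  simp only [sg, tu]; split_ifs <;> omega

def sgF (n k : ℕ) (hk : k ≤ n) (i : Fin (n+1)) : Fin (n+1) :=
  ⟨sg n k i, Nat.lt_succ_of_le (sg_le hk (Nat.lt_succ_iff.mp i.isLt))⟩

def tuF (n k : ℕ) (hk : k ≤ n) (j : Fin (n+1)) : Fin (n+1) :=
  ⟨tu n k j, Nat.lt_succ_of_le (tu_le hk (Nat.lt_succ_iff.mp j.isLt))⟩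

lemma sgF_tuF (n k : ℕ) (hk : k ≤ n) (j : Fin (n+1)) : sgF n k hk (tuF n k hk j) = j := by
  apply Fin.ext; simp [sgF, tuF, sg_tu hk (Nat.lt_succ_iff.mp j.isLt)]

lemma tuF_sgF (n k : ℕ) (hk : k ≤ n) (i : Fin (n+1)) : tuF n k hk (sgF n k hk i) = i := by
  apply Fin.ext; simp [sgF, tuF, tu_sg hk (Nat.lt_succ_iff.mp i.isLt)]

lemma sgF_inj (n k : ℕ) (hk : k ≤ n) : Function.Injective (sgF n k hk) :=
  Function.LeftInverse.injective (tuF_sgF n k hk)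

lemma tuF_inj (n k : ℕ) (hk : k ≤ n) : Function.Injective (tuF n k hk) :=
  Function.LeftInverse.injective (sgF_tuF n k hk)

lemma xmat_apply (n k : ℕ) (hk : k ≤ n) (i j : Fin (n+1)) :
    xmat n k i j = if i = tuF n k hk j then 1 else 0 := by
  have hi := i.isLt; have hj := j.isLt
  simp only [xmat, tuF, tu, Fin.ext_iff]
  split_ifs <;> first | rfl | omega

lemma xmat_apply' (n k : ℕ) (hk : k ≤ n) (i j : Fin (n+1)) :
    xmat n k i j = if j = sgF n k hk i then 1 else 0 := by
  have hi := i.isLt; have hj := j.isLt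
  simp only [xmat, sgF, sg, Fin.ext_iff]
  split_ifs <;> first | rfl | omega

lemma xmat_mul_transpose (n k : ℕ) (hk : k ≤ n) :
    xmat n k * (xmat n k)ᵀ = 1 := by
  ext i j
  simp only [Matrix.mul_apply, Matrix.transpose_apply, xmat_apply' n k hk,
    Matrix.one_apply, ite_mul, one_mul, zero_mul, Finset.sum_ite_eq', Finset.mem_univ, if_true]
  by_cases h : i = j
  · simp [h]
  · have hne : ¬ (sgF n k hk i = sgF n k hk j) := fun hc => h (sgF_inj n k hk hc)
    simp [h, hne]


lemma conj_apply (n k : ℕ) (hk : k ≤ n) (A : Matrix (Fin (n+1)) (Fin (n+1)) ℝ)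
    (i j : Fin (n+1)) :
    ((xmat n k)ᵀ * A * xmat n k) i j = A (tuF n k hk i) (tuF n k hk j) := by
  simp [Matrix.mul_apply, Matrix.transpose_apply, xmat_apply n k hk, ite_mul, mul_ite,
    Finset.sum_ite_eq, Finset.sum_ite_eq']

lemma embH_cc (n : ℕ) (h : Matrix (Fin n) (Fin n) ℝ) (i j : Fin n) :
    embH n h i.castSucc j.castSucc = h i j := by
  simp [embH, i.isLt, j.isLt]

lemma embH_cl (n : ℕ) (h : Matrix (Fin n) (Fin n) ℝ) (i : Fin n) :
    embH n h i.castSucc (Fin.last n) = 0 := by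
  simp [embH, i.isLt]

lemma embH_lc (n : ℕ) (h : Matrix (Fin n) (Fin n) ℝ) (j : Fin n) :
    embH n h (Fin.last n) j.castSucc = 0 := by
  simp [embH, j.isLt]

lemma embH_ll (n : ℕ) (h : Matrix (Fin n) (Fin n) ℝ) :
    embH n h (Fin.last n) (Fin.last n) = 1 := by
  simp [embH]

lemma embH_mul (n : ℕ) (a b : Matrix (Fin n) (Fin n) ℝ) :
    embH n (a * b) = embH n a * embH n b := by
  ext i j
  induction i using Fin.lastCases with
  | last =>
    induction j using Fin.lastCases with
    | last => simp [Matrix.mul_apply, Fin.sum_univ_castSucc, embH_lc, embH_ll, embH_cl]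
    | cast j => simp [Matrix.mul_apply, Fin.sum_univ_castSucc, embH_lc, embH_ll, embH_cl]
  | cast i =>
    induction j using Fin.lastCases with
    | last => simp [Matrix.mul_apply, Fin.sum_univ_castSucc, embH_lc, embH_ll, embH_cl,
        embH_cc]
    | cast j => simp [Matrix.mul_apply, Fin.sum_univ_castSucc, embH_lc, embH_ll, embH_cl,
        embH_cc, embH_cl]

/-- extension of the diagonal vector by 1 -/
def dh (n : ℕ) (d : Fin n → ℝ) (a : Fin (n+1)) : ℝ :=
  if h : (a : ℕ) < n then d ⟨a, h⟩ else 1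

lemma embH_diagonal (n : ℕ) (d : Fin n → ℝ) :
    embH n (Matrix.diagonal d) = Matrix.diagonal (dh n d) := by
  ext i j
  by_cases h : i = j
  · subst h
    induction i using Fin.lastCases with
    | last => simp [embH_ll, dh]
    | cast i => simp [embH_cc, dh, i.isLt]
  · rw [Matrix.diagonal_apply_ne _ h]
    induction i using Fin.lastCases with
    | last =>
      induction j using Fin.lastCases with
      | last => exact absurd rfl h
      | cast j => simp [embH_lc]
    | cast i =>
      induction j using Fin.lastCases with
      | last => simp [embH_cl]
      | cast j =>
        rw [embH_cc, Matrix.diagonal_apply_ne]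
        intro hc; exact h (by rw [hc])


lemma conj_diag (n k : ℕ) (hk : k ≤ n) (d : Fin n → ℝ) :
    (xmat n k)ᵀ * embH n (Matrix.diagonal d) * xmat n k
      = Matrix.diagonal (fun j => dh n d (tuF n k hk j)) := by
  ext i j
  rw [conj_apply n k hk, embH_diagonal]
  by_cases h : i = j
  · subst h; simp
  · rw [Matrix.diagonal_apply_ne _ h,
      Matrix.diagonal_apply_ne _ (fun hc => h (tuF_inj n k hk hc))]

lemma conj_tri (n k : ℕ) (hk : k ≤ n) (u : Matrix (Fin n) (Fin n) ℝ)
    (hu : u.BlockTriangular id) :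
    ((xmat n k)ᵀ * embH n u * xmat n k).BlockTriangular id := by
  intro i j hij
  rw [conj_apply n k hk]
  have hij' : (j : ℕ) < (i : ℕ) := hij
  have hi := Nat.lt_succ_iff.mp i.isLt
  have hj := Nat.lt_succ_iff.mp j.isLt
  show embH n u (tuF n k hk i) (tuF n k hk j) = 0
  by_cases ha : tu n k (i : ℕ) < n <;> by_cases hb : tu n k (j : ℕ) < n
  · have hlt : tu n k (j : ℕ) < tu n k (i : ℕ) := by
      simp only [tu] at *; split_ifs at * <;> omega
    have h0 : u ⟨tu n k (i : ℕ), ha⟩ ⟨tu n k (j : ℕ), hb⟩ = 0 :=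
      hu (show (id (⟨tu n k (j:ℕ), hb⟩ : Fin n)) < id ⟨tu n k (i:ℕ), ha⟩ from Fin.mk_lt_mk.mpr hlt)
    simpa [embH, tuF, ha, hb] using h0
  · simp [embH, tuF, ha, hb]
  · simp [embH, tuF, ha, hb]
  · exfalso; simp only [tu] at ha hb; split_ifs at ha hb <;> omega

lemma conj_diag_one (n k : ℕ) (hk : k ≤ n) (u : Matrix (Fin n) (Fin n) ℝ)
    (hu1 : ∀ i, u i i = 1) (i : Fin (n+1)) :
    ((xmat n k)ᵀ * embH n u * xmat n k) i i = 1 := by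
  rw [conj_apply n k hk]
  show embH n u (tuF n k hk i) (tuF n k hk i) = 1
  by_cases ha : tu n k (i : ℕ) < n
  · simpa [embH, tuF, ha] using hu1 ⟨tu n k (i:ℕ), ha⟩
  · simp [embH, tuF, ha]

end Aux

/-- The restriction operator `rest_k` maps `π_{ξ,λ}` to `τ_{η_k(ξ),ν_k(λ)}` and is
`H`-equivariant for the left regular actions. -/
theorem stmt10 (n k : ℕ) (hk : k ≤ n) (ξ : Fin (n+1) → ℕ) (lam : Fin (n+1) → ℂ)
    (f : Matrix (Fin (n+1)) (Fin (n+1)) ℝ → ℂ) (hf : PS (n+1) ξ lam f) :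
    PS n (etak n k ξ) (nuk n k lam) (restk n k f)
    ∧ ∀ h0 h : Matrix (Fin n) (Fin n) ℝ,
        restk n k f (h0 * h) = restk n k (fun g => f (embH n h0 * g)) h := by
  constructor
  · intro g u d hd hu hu1
    set x := xmat n k with hx
    have hxxT : x * xᵀ = 1 := Aux.xmat_mul_transpose n k hk
    set D := embH n (Matrix.diagonal d) with hD
    set U := embH n u with hU
    set u' := xᵀ * U * x with hu'
    set d' : Fin (n+1) → ℝ := fun j => Aux.dh n d (Aux.tuF n k hk j) with hd'
    have hDconj : xᵀ * D * x = Matrix.diagonal d' := Aux.conj_diag n k hk d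
    have e1 : x * (Matrix.diagonal d' * u') = D * (U * x) := by
      rw [← hDconj, hu']
      calc x * ((xᵀ * D * x) * (xᵀ * U * x))
          = (x * xᵀ) * (D * ((x * xᵀ) * (U * x))) := by simp only [Matrix.mul_assoc]
        _ = D * (U * x) := by rw [hxxT, Matrix.one_mul, Matrix.one_mul]
    have key : embH n (g * (Matrix.diagonal d * u)) * x
        = (embH n g * x) * (Matrix.diagonal d' * u') := by
      rw [Aux.embH_mul, Aux.embH_mul, ← hD, ← hU]
      simp only [Matrix.mul_assoc]
      rw [e1]
    have hd2 : ∀ i, d' i ≠ 0 := by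
      intro i
      simp only [hd', Aux.dh]
      split
      · exact hd _
      · exact one_ne_zero
    have htri : u'.BlockTriangular id := Aux.conj_tri n k hk u hu
    have hdiag : ∀ i, u' i i = 1 := Aux.conj_diag_one n k hk u hu1
    have := hf (embH n g * x) u' d' hd2 htri hdiag
    rw [restk, key, this, restk]
    congr 1
    rw [Fin.prod_univ_succAbove _ ⟨k, Nat.lt_succ_of_le hk⟩]
    have hdk : d' ⟨k, Nat.lt_succ_of_le hk⟩ = 1 := by
      simp [hd', Aux.dh, Aux.tuF, Aux.tu]
    rw [hdk]
    simp only [Real.sign_one, Complex.ofReal_one, one_pow, abs_one, Complex.one_cpow, one_mul]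
    apply Finset.prod_congr rfl
    intro i _
    have hsa : (⟨k, Nat.lt_succ_of_le hk⟩ : Fin (n+1)).succAbove i
        = if (i : ℕ) < k then i.castSucc else i.succ := by
      rw [Fin.succAbove]
      by_cases hik : (i : ℕ) < k
      · rw [if_pos hik, if_pos (by exact hik)]
      · rw [if_neg hik, if_neg (by exact hik)]
    by_cases hik : (i : ℕ) < k
    · rw [hsa, if_pos hik]
      have hdv : d' i.castSucc = d i := by
        simp [hd', Aux.dh, Aux.tuF, Aux.tu, hik, i.isLt]
      rw [hdv]
      simp only [etak, nuk, if_pos hik]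
      congr 2
      push_cast [Fin.coe_castSucc]
      ring
    · rw [hsa, if_neg hik]
      have h1 : ¬ ((i : ℕ) + 1 < k) := by omega
      have h2 : (i : ℕ) + 1 ≠ k := by omega
      have hdv : d' i.succ = d i := by
        simp [hd', Aux.dh, Aux.tuF, Aux.tu, h1, h2, i.isLt]
      rw [hdv]
      simp only [etak, nuk, if_neg hik]
      congr 2
      push_cast [Fin.val_succ]
      ring
  · intro h0 h
    simp only [restk, Aux.embH_mul, Matrix.mul_assoc]
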